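/- arXiv:2006.05335 — 3 statements merged into one kernel-verified Lean document; each statement's English description precedes it below -/
import Mathlib

section
/- Let λ ∈ C⁰([0,T]; [0,∞)) with ∫₀ᵀ λ(t) dt > L, and let y₀* ∈ C¹(ℝ) be supported in [−η, L+η] where 0 < η < L/2 and ∫₀ᵀ λ(t) dt > L + 2η. Let z* ∈ C⁰([0,T]; C¹_b(ℝ)) satisfy ‖z*‖_{C⁰([0,T];C⁰_b(ℝ))} ≤ η/T, and let Φ* be the flow of ξ' = λ(t) + z*(t, ξ). Then the function y(t, x̄) := y₀*(Φ*(t; 0, x̄)) is C¹, solves y_t + (λ(t) + z*(t,x)) y_x = 0 with y(0,·) = y₀*, and satisfies y(T, x) = 0 for all x ∈ [0, L]. -/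
open Set
open scoped Topology

/-- the function `y(t,x) := y₀*(Φ*(t;0,x))` built from the flow `Φ*` of
`ξ' = λ(t) + z*(t,ξ)` is C¹, solves the transport equation
`y_t + (λ(t)+z*(t,x)) y_x = 0` with initial datum `y₀*`, and vanishes at time `T`
on `[0,L]`, provided `∫₀ᵀ λ > L + 2η`, `supp y₀* ⊆ [−η, L+η]` and `‖z*‖∞ ≤ η/T`. -/
theorem return_method_transport_null_state
    (T L η : ℝ) (hT : 0 < T) (hL : 0 < L) (hη : 0 < η) (hηL : η < L / 2)
    (lam : ℝ → ℝ) (hlamc : ContinuousOn lam (Icc 0 T))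
    (hlampos : ∀ t ∈ Icc 0 T, 0 ≤ lam t)
    (hlamint : L + 2 * η < ∫ t in (0:ℝ)..T, lam t)
    (y0 : ℝ → ℝ) (hy0 : ContDiff ℝ 1 y0) (hy0supp : tsupport y0 ⊆ Icc (-η) (L + η))
    (z : ℝ → ℝ → ℝ) (K : NNReal)
    (hzc : ContinuousOn (fun p : ℝ × ℝ => z p.1 p.2) (Icc 0 T ×ˢ univ))
    (hzlip : ∀ t ∈ Icc 0 T, LipschitzWith K (z t))
    (hzb : ∀ t ∈ Icc 0 T, ∀ x : ℝ, |z t x| ≤ η / T)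
    (Φ : ℝ → ℝ → ℝ → ℝ)
    (hΦ : ∀ s ∈ Icc 0 T, ∀ x : ℝ, Φ s s x = x ∧
      ∀ t ∈ Icc 0 T,
        HasDerivWithinAt (fun τ => Φ s τ x) (lam t + z t (Φ s t x)) (Icc 0 T) t)
    (hΦC1 : ContDiffOn ℝ 1 (fun p : ℝ × ℝ × ℝ => Φ p.1 p.2.1 p.2.2)
      (Icc 0 T ×ˢ Icc 0 T ×ˢ univ)) :
    -- with y(t,x) := y₀*(Φ*(t;0,x)):
    ContDiffOn ℝ 1 (fun p : ℝ × ℝ => y0 (Φ p.1 0 p.2)) (Icc 0 T ×ˢ univ) ∧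
    (∀ x : ℝ, y0 (Φ 0 0 x) = y0 x) ∧
    (∀ t ∈ Ioo 0 T, ∀ x : ℝ, ∃ a b : ℝ,
      HasDerivAt (fun τ => y0 (Φ τ 0 x)) a t ∧
      HasDerivAt (fun ξ => y0 (Φ t 0 ξ)) b x ∧
      a + (lam t + z t x) * b = 0) ∧
    (∀ x ∈ Icc 0 L, y0 (Φ T 0 x) = 0) := by
  have h0T : (0:ℝ) ∈ Icc 0 T := ⟨le_refl 0, hT.le⟩
  have hTT : T ∈ Icc (0:ℝ) T := ⟨hT.le, le_refl T⟩
  -- Part 1 : regularity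
  have hΦreg : ContDiffOn ℝ 1 (fun p : ℝ × ℝ => Φ p.1 0 p.2) (Icc 0 T ×ˢ univ) := by
    have hg : ContDiff ℝ 1 (fun p : ℝ × ℝ => (p.1, ((0:ℝ), p.2))) :=
      contDiff_fst.prodMk (contDiff_const.prodMk contDiff_snd)
    exact hΦC1.comp hg.contDiffOn (fun p hp => ⟨hp.1, h0T, mem_univ _⟩)
  have hC1 : ContDiffOn ℝ 1 (fun p : ℝ × ℝ => y0 (Φ p.1 0 p.2)) (Icc 0 T ×ˢ univ) :=
    hy0.comp_contDiffOn hΦreg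
  -- flow basics
  have hcontflow : ∀ s ∈ Icc 0 T, ∀ x : ℝ, ContinuousOn (fun τ => Φ s τ x) (Icc 0 T) :=
    fun s hs x τ hτ => ((hΦ s hs x).2 τ hτ).continuousWithinAt
  -- the extended vector field
  set v : ℝ → ℝ → ℝ := fun t ξ => lam (max 0 (min t T)) + z (max 0 (min t T)) ξ with hv_def
  have hproj : ∀ t ∈ Icc (0:ℝ) T, max 0 (min t T) = t := by
    intro t ht; rw [min_eq_left ht.2, max_eq_right ht.1]
  have hprojmem : ∀ t : ℝ, max 0 (min t T) ∈ Icc (0:ℝ) T :=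
    fun t => ⟨le_max_left _ _, max_le (hT.le) (min_le_right _ _)⟩
  have hvlip : ∀ t : ℝ, LipschitzOnWith K (v t) univ := by
    intro t
    apply LipschitzWith.lipschitzOnWith
    apply LipschitzWith.of_dist_le_mul
    intro a b
    simp only [hv_def]
    rw [dist_add_left]
    exact (hzlip _ (hprojmem t)).dist_le_mul a b
  -- uniqueness / group property: Φ τ σ (Φ s τ x) = Φ s σ x
  have key : ∀ s ∈ Icc 0 T, ∀ x : ℝ, ∀ τ ∈ Icc 0 T, ∀ σ ∈ Icc 0 T,
      Φ τ σ (Φ s τ x) = Φ s σ x := by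
    intro s hs x τ hτ σ hσ
    set f : ℝ → ℝ := fun σ => Φ τ σ (Φ s τ x) with hf_def
    set g : ℝ → ℝ := fun σ => Φ s σ x with hg_def
    have hfc : ContinuousOn f (Icc 0 T) := hcontflow τ hτ _
    have hgc : ContinuousOn g (Icc 0 T) := hcontflow s hs x
    have hfτ : f τ = g τ := (hΦ τ hτ (Φ s τ x)).1
    have hfd : ∀ σ ∈ Icc (0:ℝ) T, HasDerivWithinAt f (v σ (f σ)) (Icc 0 T) σ := by
      intro σ hσ
      have := (hΦ τ hτ (Φ s τ x)).2 σ hσ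
      simpa [hv_def, hproj σ hσ] using this
    have hgd : ∀ σ ∈ Icc (0:ℝ) T, HasDerivWithinAt g (v σ (g σ)) (Icc 0 T) σ := by
      intro σ hσ
      have := (hΦ s hs x).2 σ hσ
      simpa [hv_def, hproj σ hσ] using this
    rcases le_total σ τ with hστ | hστ
    · -- backward uniqueness on [0, τ]
      have := ODE_solution_unique_of_mem_Icc_left (v := v) (s := fun _ => univ)
        (a := 0) (b := τ) (fun t _ => hvlip t)
        (hfc.mono (Icc_subset_Icc_right hτ.2))
        (fun u hu => (hfd u ⟨hu.1.le, hu.2.trans hτ.2⟩).mono_of_mem_nhdsWithin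
          (Icc_mem_nhdsLE_of_mem ⟨hu.1, hu.2.trans hτ.2⟩))
        (fun _ _ => mem_univ _)
        (hgc.mono (Icc_subset_Icc_right hτ.2))
        (fun u hu => (hgd u ⟨hu.1.le, hu.2.trans hτ.2⟩).mono_of_mem_nhdsWithin
          (Icc_mem_nhdsLE_of_mem ⟨hu.1, hu.2.trans hτ.2⟩))
        (fun _ _ => mem_univ _) hfτ
      exact this ⟨hσ.1, hστ⟩
    · -- forward uniqueness on [τ, T]
      have := ODE_solution_unique_of_mem_Icc_right (v := v) (s := fun _ => univ)
        (a := τ) (b := T) (fun t _ => hvlip t)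
        (hfc.mono (Icc_subset_Icc_left hτ.1))
        (fun u hu => (hfd u ⟨hτ.1.trans hu.1, hu.2.le⟩).mono_of_mem_nhdsWithin
          (Icc_mem_nhdsGE_of_mem ⟨hτ.1.trans hu.1, hu.2⟩))
        (fun _ _ => mem_univ _)
        (hgc.mono (Icc_subset_Icc_left hτ.1))
        (fun u hu => (hgd u ⟨hτ.1.trans hu.1, hu.2.le⟩).mono_of_mem_nhdsWithin
          (Icc_mem_nhdsGE_of_mem ⟨hτ.1.trans hu.1, hu.2⟩))
        (fun _ _ => mem_univ _) hfτ
      exact this ⟨hστ, hσ.2⟩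
  refine ⟨hC1, ?_, ?_, ?_⟩
  · -- Part 2 : initial datum
    intro x
    rw [(hΦ 0 h0T x).1]
  · -- Part 3 : the transport equation
    intro t ht x
    have htI : t ∈ Icc (0:ℝ) T := ⟨ht.1.le, ht.2.le⟩
    set F : ℝ × ℝ → ℝ := fun p => y0 (Φ p.1 0 p.2) with hF_def
    have hnhds : (Icc 0 T ×ˢ (univ : Set ℝ)) ∈ 𝓝 ((t, x) : ℝ × ℝ) := by
      apply prod_mem_nhds (Icc_mem_nhds ht.1 ht.2) Filter.univ_mem
    have hFd : DifferentiableAt ℝ F (t, x) :=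
      ((hC1.differentiableOn one_ne_zero) (t, x) ⟨htI, mem_univ _⟩).differentiableAt hnhds
    set D := fderiv ℝ F (t, x) with hD_def
    refine ⟨D (1, 0), D (0, 1), ?_, ?_, ?_⟩
    · have h1 : HasDerivAt (fun τ : ℝ => ((τ, x) : ℝ × ℝ)) (1, 0) t :=
        (hasDerivAt_id t).prodMk (hasDerivAt_const t x)
      exact hFd.hasFDerivAt.comp_hasDerivAt t h1
    · have h1 : HasDerivAt (fun ξ : ℝ => ((t, ξ) : ℝ × ℝ)) (0, 1) x :=
        (hasDerivAt_const x t).prodMk (hasDerivAt_id x)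
      exact hFd.hasFDerivAt.comp_hasDerivAt x h1
    · -- differentiate the constant τ ↦ y₀(Φ τ 0 (Φ t τ x))
      have hφd : HasDerivAt (fun τ => Φ t τ x) (lam t + z t (Φ t t x)) t :=
        ((hΦ t htI x).2 t htI).hasDerivAt (Icc_mem_nhds ht.1 ht.2)
      have hφtt : Φ t t x = x := (hΦ t htI x).1
      have hinner : HasDerivAt (fun τ : ℝ => ((τ, Φ t τ x) : ℝ × ℝ))
          (1, lam t + z t x) t := by
        have := (hasDerivAt_id t).prodMk hφd
        rwa [hφtt] at this
      have hFd' : HasFDerivAt F D (t, Φ t t x) := by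
        rw [hφtt]; exact hFd.hasFDerivAt
      have hcomp : HasDerivAt (fun τ => F (τ, Φ t τ x)) (D (1, lam t + z t x)) t :=
        by have := hFd'.comp_hasDerivAt t hinner; exact this
      have hconst : (fun τ => F (τ, Φ t τ x)) =ᶠ[𝓝 t] fun _ => y0 (Φ t 0 x) := by
        filter_upwards [Icc_mem_nhds ht.1 ht.2] with τ hτ
        simp only [hF_def]
        rw [key t htI x τ hτ 0 h0T]
      have hzero : HasDerivAt (fun τ => F (τ, Φ t τ x)) 0 t :=
        (hasDerivAt_const t (y0 (Φ t 0 x))).congr_of_eventuallyEq hconst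
      have hDzero : D (1, lam t + z t x) = 0 := hcomp.unique hzero
      have hsplit : ((1 : ℝ), lam t + z t x) =
          ((1 : ℝ), (0:ℝ)) + (lam t + z t x) • (((0:ℝ), (1:ℝ)) : ℝ × ℝ) := by
        simp [Prod.ext_iff]
      calc D (1, 0) + (lam t + z t x) * D (0, 1)
          = D ((1, 0) + (lam t + z t x) • ((0:ℝ), (1:ℝ))) := by
            rw [map_add, map_smul, smul_eq_mul]
        _ = D (1, lam t + z t x) := by rw [← hsplit]
        _ = 0 := hDzero
  · -- Part 4 : null at time T on [0, L]
    intro x hx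
    set ξ : ℝ → ℝ := fun τ => Φ T τ x with hξ_def
    have hξc : ContinuousOn ξ (Icc 0 T) := hcontflow T hTT x
    have hξT : ξ T = x := (hΦ T hTT x).1
    have hgc : ContinuousOn (fun t => z t (ξ t)) (Icc 0 T) := by
      have : ContinuousOn (fun t : ℝ => ((t, ξ t) : ℝ × ℝ)) (Icc 0 T) :=
        (continuousOn_id).prodMk hξc
      exact hzc.comp this (fun t ht => ⟨ht, mem_univ _⟩)
    have hgint : IntervalIntegrable (fun t => z t (ξ t)) MeasureTheory.volume 0 T :=
      (hgc.mono (by rw [uIcc_of_le hT.le])).intervalIntegrable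
    have hlint : IntervalIntegrable lam MeasureTheory.volume 0 T :=
      (hlamc.mono (by rw [uIcc_of_le hT.le])).intervalIntegrable
    have hftc : ∫ t in (0:ℝ)..T, (lam t + z t (ξ t)) = ξ T - ξ 0 := by
      apply intervalIntegral.integral_eq_sub_of_hasDeriv_right_of_le hT.le hξc
      · intro u hu
        exact ((hΦ T hTT x).2 u ⟨hu.1.le, hu.2.le⟩).mono_of_mem_nhdsWithin
          (Icc_mem_nhdsGT_of_mem ⟨hu.1.le, hu.2⟩)
      · exact hlint.add hgint
    have hzlow : -η ≤ ∫ t in (0:ℝ)..T, z t (ξ t) := by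
      have : ∫ t in (0:ℝ)..T, (-(η/T)) ≤ ∫ t in (0:ℝ)..T, z t (ξ t) := by
        apply intervalIntegral.integral_mono_on hT.le intervalIntegrable_const hgint
        intro u hu
        exact neg_le_of_abs_le (hzb u hu (ξ u))
      have hcval : ∫ _t in (0:ℝ)..T, (-(η/T)) = -η := by
        rw [intervalIntegral.integral_const, smul_eq_mul]
        field_simp
        ring
      linarith [this, hcval.ge]
    have hsum : ∫ t in (0:ℝ)..T, (lam t + z t (ξ t))
        = (∫ t in (0:ℝ)..T, lam t) + ∫ t in (0:ℝ)..T, z t (ξ t) :=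
      intervalIntegral.integral_add hlint hgint
    have hbig : L + η < ξ T - ξ 0 := by
      rw [← hftc] at *
      rw [hsum]
      linarith
    have hout : Φ T 0 x < -η := by
      have : ξ 0 < x - (L + η) := by
        have := hbig
        rw [hξT] at this
        linarith
      have hxL : x ≤ L := hx.2
      calc Φ T 0 x = ξ 0 := rfl
        _ < x - (L + η) := this
        _ ≤ -η := by linarith
    apply image_eq_zero_of_notMem_tsupport
    intro hmem
    have := hy0supp hmem
    exact absurd this.1 (by linarith)
end

section
/- Let α > 0 and let z solve z − α² z_xx = h on (0,L) with boundary values z(0) = h(0), z(L) = h(L), where h ∈ C^{0,1}([0,L]). Then z_x satisfies ‖z_x‖_{L^∞(0,L)} ≤ Lip(h), the Lipschitz constant of h. -/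
open Set

/-- Elliptic maximum principle: if `u - α² u'' ≤ 0` on `(a,b)` and `u ≤ 0` at the
endpoints, then `u ≤ 0` on `[a,b]`. -/
lemma elliptic_max_principle (a b α : ℝ) (hab : a < b) (hα : 0 < α)
    (u u' u'' : ℝ → ℝ)
    (hc : ContinuousOn u (Icc a b))
    (hd1 : ∀ x ∈ Ioo a b, HasDerivAt u (u' x) x)
    (hd2 : ∀ x ∈ Ioo a b, HasDerivAt u' (u'' x) x)
    (hineq : ∀ x ∈ Ioo a b, u x - α ^ 2 * u'' x ≤ 0)
    (ha : u a ≤ 0) (hb : u b ≤ 0) :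
    ∀ x ∈ Icc a b, u x ≤ 0 := by
  obtain ⟨p, hp, hmax⟩ := isCompact_Icc.exists_isMaxOn (nonempty_Icc.2 hab.le) hc
  intro x hx
  refine le_trans (hmax hx) ?_
  by_contra hpos
  push_neg at hpos
  have hpIoo : p ∈ Ioo a b := by
    rcases eq_or_lt_of_le hp.1 with h1 | h1
    · exact absurd (h1 ▸ ha) (not_le.2 hpos)
    rcases eq_or_lt_of_le hp.2 with h2 | h2
    · exact absurd (h2 ▸ hb) (not_le.2 hpos)
    exact ⟨h1, h2⟩
  have hnhds : Icc a b ∈ nhds p := Icc_mem_nhds hpIoo.1 hpIoo.2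
  have hca : ContinuousAt u p := (hd1 p hpIoo).continuousAt
  have hev : ∀ᶠ y in nhds p, 0 < u y ∧ y ∈ Ioo a b :=
    (hca.eventually (eventually_gt_nhds hpos)).and
      (Filter.eventually_of_mem (isOpen_Ioo.mem_nhds hpIoo) (fun y hy => hy))
  obtain ⟨ε, hε, hball⟩ := Metric.eventually_nhds_iff_ball.1 hev
  set q := p + ε / 2 with hqdef
  have hq : p < q := by simp [hqdef]; linarith
  have hsub : ∀ y ∈ Icc p q, 0 < u y ∧ y ∈ Ioo a b := by
    intro y hy
    apply hball
    rw [Metric.mem_ball, Real.dist_eq, abs_of_nonneg (by linarith [hy.1])]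
    have := hy.2
    simp only [hqdef] at this ⊢
    linarith
  have hloc : IsLocalMax u p := hmax.isLocalMax hnhds
  have hup : u' p = 0 := hloc.hasDerivAt_eq_zero (hd1 p hpIoo)
  -- u' is strictly monotone on [p, q]
  have hmono' : StrictMonoOn u' (Icc p q) := by
    apply strictMonoOn_of_deriv_pos (convex_Icc p q)
    · intro y hy
      exact (hd2 y (hsub y hy).2).continuousAt.continuousWithinAt
    · intro y hy
      rw [interior_Icc] at hy
      have hy' := hsub y (Ioo_subset_Icc_self hy)
      rw [(hd2 y hy'.2).deriv]
      have h1 := hineq y hy'.2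
      nlinarith [hy'.1, pow_pos hα 2]
  -- hence u is strictly monotone on [p, q]
  have hmono : StrictMonoOn u (Icc p q) := by
    apply strictMonoOn_of_deriv_pos (convex_Icc p q)
    · intro y hy
      exact (hd1 y (hsub y hy).2).continuousAt.continuousWithinAt
    · intro y hy
      rw [interior_Icc] at hy
      rw [(hd1 y (hsub y (Ioo_subset_Icc_self hy)).2).deriv]
      have := hmono' (left_mem_Icc.2 hq.le) (Ioo_subset_Icc_self hy) hy.1
      rw [hup] at this
      exact this
  have h1 : u p < u q := hmono (left_mem_Icc.2 hq.le) (right_mem_Icc.2 hq.le) hq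
  have h2 : u q ≤ u p := hmax (Ioo_subset_Icc_self (hsub q (right_mem_Icc.2 hq.le)).2)
  linarith

/-- if `z - α² z'' = h` on `(0,L)` with `z(0) = h(0)`, `z(L) = h(L)` and
`h` Lipschitz on `[0,L]` with constant `K`, then `‖z_x‖_{L^∞(0,L)} ≤ K`. -/
theorem elliptic_filter_gradient_estimate
    (L α : ℝ) (hL : 0 < L) (hα : 0 < α)
    (z z' z'' h : ℝ → ℝ) (K : NNReal)
    (hh : LipschitzOnWith K h (Icc 0 L))
    (hzc : ContinuousOn z (Icc 0 L))
    (hz'c : ContinuousOn z' (Ioo 0 L))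
    (hz1 : ∀ x ∈ Ioo 0 L, HasDerivAt z (z' x) x)
    (hz2 : ∀ x ∈ Ioo 0 L, HasDerivAt z' (z'' x) x)
    (heq : ∀ x ∈ Ioo 0 L, z x - α ^ 2 * z'' x = h x)
    (hbl : z 0 = h 0) (hbr : z L = h L) :
    ∀ x ∈ Ioo 0 L, |z' x| ≤ K := by
  -- Lipschitz bound on h in convenient form
  have hK : ∀ x ∈ Icc 0 L, ∀ y ∈ Icc 0 L, |h x - h y| ≤ (K : ℝ) * |x - y| := by
    intro x hx y hy
    have := hh.dist_le_mul x hx y hy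
    rwa [Real.dist_eq, Real.dist_eq] at this
  have h0m : (0 : ℝ) ∈ Icc 0 L := ⟨le_refl 0, hL.le⟩
  have hLm : L ∈ Icc 0 L := ⟨hL.le, le_refl L⟩
  -- four barrier estimates
  have bar_a : ∀ x ∈ Icc 0 L, z x ≤ h 0 + K * x := by
    have := elliptic_max_principle 0 L α hL hα
      (fun x => z x - (h 0 + K * x)) (fun x => z' x - K) z''
      (hzc.sub ((continuousOn_const.add (continuous_mul_left (K : ℝ)).continuousOn)))
      (fun x hx => (hz1 x hx).sub (by
        simpa using (((hasDerivAt_id x).const_mul (K : ℝ)).const_add (h 0))))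
      (fun x hx => by simpa using (hz2 x hx).sub_const (K : ℝ))
      (fun x hx => by
        have h1 := heq x hx
        have h2 := hK x (Ioo_subset_Icc_self hx) 0 h0m
        rw [abs_le] at h2
        rw [abs_of_nonneg (by linarith [hx.1] : (0:ℝ) ≤ x - 0)] at h2
        linarith [h2.2])
      (by simp [hbl])
      (by
        have h2 := hK L hLm 0 h0m
        rw [abs_le, abs_of_nonneg (by linarith : (0:ℝ) ≤ L - 0)] at h2
        simp only [hbr]
        linarith [h2.2])
    intro x hx
    have h1 : z x - (h 0 + (K:ℝ) * x) ≤ 0 := this x hx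
    linarith
  have bar_b : ∀ x ∈ Icc 0 L, h 0 - K * x ≤ z x := by
    have := elliptic_max_principle 0 L α hL hα
      (fun x => h 0 - K * x - z x) (fun x => -K - z' x) (fun x => -z'' x)
      ((continuousOn_const.sub (continuous_mul_left (K : ℝ)).continuousOn).sub hzc)
      (fun x hx => by
        have := ((((hasDerivAt_id x).const_mul (K : ℝ)).const_sub (h 0)).sub (hz1 x hx))
        exact this.congr_deriv (by ring))
      (fun x hx => by simpa using (hz2 x hx).const_sub (-(K : ℝ)))
      (fun x hx => by
        have h1 := heq x hx
        have h2 := hK x (Ioo_subset_Icc_self hx) 0 h0m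
        rw [abs_le, abs_of_nonneg (by linarith [hx.1] : (0:ℝ) ≤ x - 0)] at h2
        linarith [h2.1])
      (by simp [hbl])
      (by
        have h2 := hK L hLm 0 h0m
        rw [abs_le, abs_of_nonneg (by linarith : (0:ℝ) ≤ L - 0)] at h2
        simp only [hbr]
        linarith [h2.1])
    intro x hx
    have h1 : h 0 - (K:ℝ) * x - z x ≤ 0 := this x hx
    linarith
  have bar_c : ∀ x ∈ Icc 0 L, z x ≤ h L + K * (L - x) := by
    have := elliptic_max_principle 0 L α hL hα
      (fun x => z x - (h L + K * (L - x))) (fun x => z' x + K) z''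
      (hzc.sub (continuousOn_const.add
        (continuous_const.mul (continuous_const.sub continuous_id) : Continuous fun x : ℝ => (K:ℝ) * (L - x)).continuousOn))
      (fun x hx => by
        have hb : HasDerivAt (fun y => h L + (K : ℝ) * (L - y)) (-(K : ℝ)) x := by
          simpa using (((hasDerivAt_id x).const_sub L).const_mul (K : ℝ)).const_add (h L)
        exact ((hz1 x hx).sub hb).congr_deriv (by ring))
      (fun x hx => by simpa using (hz2 x hx).add_const (K : ℝ))
      (fun x hx => by
        have h1 := heq x hx
        have h2 := hK x (Ioo_subset_Icc_self hx) L hLm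
        rw [abs_le, abs_of_nonpos (by linarith [hx.2] : x - L ≤ 0)] at h2
        linarith [h2.2])
      (by
        have h2 := hK 0 h0m L hLm
        rw [abs_le, abs_of_nonpos (by linarith : (0:ℝ) - L ≤ 0)] at h2
        simp only [hbl]
        linarith [h2.2])
      (by simp [hbr])
    intro x hx
    have h1 : z x - (h L + (K:ℝ) * (L - x)) ≤ 0 := this x hx
    linarith
  have bar_d : ∀ x ∈ Icc 0 L, h L - K * (L - x) ≤ z x := by
    have := elliptic_max_principle 0 L α hL hα
      (fun x => h L - K * (L - x) - z x) (fun x => K - z' x) (fun x => -z'' x)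
      ((continuousOn_const.sub
        (continuous_const.mul (continuous_const.sub continuous_id) : Continuous fun x : ℝ => (K:ℝ) * (L - x)).continuousOn).sub hzc)
      (fun x hx => by
        have hb : HasDerivAt (fun y => h L - (K : ℝ) * (L - y)) ((K : ℝ)) x := by
          simpa using (((hasDerivAt_id x).const_sub L).const_mul (K : ℝ)).const_sub (h L)
        exact hb.sub (hz1 x hx))
      (fun x hx => by simpa using (hz2 x hx).const_sub ((K : ℝ)))
      (fun x hx => by
        have h1 := heq x hx
        have h2 := hK x (Ioo_subset_Icc_self hx) L hLm
        rw [abs_le, abs_of_nonpos (by linarith [hx.2] : x - L ≤ 0)] at h2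
        linarith [h2.1])
      (by
        have h2 := hK 0 h0m L hLm
        rw [abs_le, abs_of_nonpos (by linarith : (0:ℝ) - L ≤ 0)] at h2
        simp only [hbl]
        linarith [h2.1])
      (by simp [hbr])
    intro x hx
    have h1 : h L - (K:ℝ) * (L - x) - z x ≤ 0 := this x hx
    linarith
  -- key: z is K-Lipschitz on [0, L]
  have key : ∀ x ∈ Icc 0 L, ∀ y ∈ Icc 0 L, x < y → |z y - z x| ≤ (K : ℝ) * (y - x) := by
    intro x hx y hy hxy
    set δ := y - x with hδdef
    have hδ : 0 < δ := by simp [hδdef]; linarith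
    have hδL : δ ≤ L := by simp [hδdef]; linarith [hx.1, hy.2]
    rcases eq_or_lt_of_le hδL with hδL | hδL
    · -- δ = L forces x = 0, y = L
      have hx0 : x = 0 := by linarith [hx.1, hy.2]
      have hyL : y = L := by linarith [hx.1, hy.2]
      rw [hx0, hyL, hbl, hbr, hδL]
      have h2 := hK L hLm 0 h0m
      rwa [sub_zero, abs_of_nonneg hL.le] at h2
    · -- 0 < δ < L : translation argument
      have hxm : x ∈ Icc 0 (L - δ) := ⟨hx.1, by linarith [hy.2]⟩
      have hmem : ∀ t ∈ Ioo 0 (L - δ), t ∈ Ioo 0 L ∧ t + δ ∈ Ioo 0 L := by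
        intro t ht
        exact ⟨⟨ht.1, by linarith [ht.2]⟩, ⟨by linarith [ht.1], by linarith [ht.2]⟩⟩
      have hLδ : (0 : ℝ) < L - δ := by linarith
      have hshift : ∀ t ∈ Ioo 0 (L - δ), HasDerivAt (fun s => z (s + δ)) (z' (t + δ)) t :=
        fun t ht => HasDerivAt.comp_add_const t δ (hz1 (t + δ) (hmem t ht).2)
      have hshift2 : ∀ t ∈ Ioo 0 (L - δ), HasDerivAt (fun s => z' (s + δ)) (z'' (t + δ)) t :=
        fun t ht => HasDerivAt.comp_add_const t δ (hz2 (t + δ) (hmem t ht).2)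
      have hcs : ContinuousOn (fun s => z (s + δ)) (Icc 0 (L - δ)) := by
        apply hzc.comp (continuous_add_right δ).continuousOn
        intro t ht
        exact ⟨show (0:ℝ) ≤ t + δ by linarith [ht.1], show t + δ ≤ L by linarith [ht.2]⟩
      have hcz : ContinuousOn z (Icc 0 (L - δ)) :=
        hzc.mono (Icc_subset_Icc (le_refl 0) (by linarith))
      have hIcc : ∀ t ∈ Ioo 0 (L - δ), t ∈ Icc 0 L ∧ t + δ ∈ Icc 0 L := fun t ht =>
        ⟨Ioo_subset_Icc_self (hmem t ht).1, Ioo_subset_Icc_self (hmem t ht).2⟩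
      have hδm : δ ∈ Icc 0 L := ⟨hδ.le, hδL.le⟩
      have hLδm : L - δ ∈ Icc 0 L := ⟨by linarith, by linarith⟩
      -- upper bound
      have up := elliptic_max_principle 0 (L - δ) α hLδ hα
        (fun t => z (t + δ) - z t - K * δ) (fun t => z' (t + δ) - z' t)
        (fun t => z'' (t + δ) - z'' t)
        (((hcs.sub hcz)).sub continuousOn_const)
        (fun t ht => ((hshift t ht).sub (hz1 t (hmem t ht).1)).sub_const _)
        (fun t ht => (hshift2 t ht).sub (hz2 t (hmem t ht).1))
        (fun t ht => by
          have h1 := heq t (hmem t ht).1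
          have h2 := heq (t + δ) (hmem t ht).2
          have h3 := hK (t + δ) (hIcc t ht).2 t (hIcc t ht).1
          rw [abs_le, abs_of_nonneg (by linarith : (0:ℝ) ≤ t + δ - t)] at h3
          ring_nf
          ring_nf at h1 h2
          nlinarith [h3.2])
        (by
          have := bar_a δ hδm
          simp only [zero_add, hbl]
          linarith)
        (by
          have := bar_d (L - δ) hLδm
          simp only [sub_add_cancel, hbr]
          ring_nf
          ring_nf at this
          linarith)
      -- lower bound
      have lo := elliptic_max_principle 0 (L - δ) α hLδ hα
        (fun t => z t - z (t + δ) - K * δ) (fun t => z' t - z' (t + δ))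
        (fun t => z'' t - z'' (t + δ))
        (((hcz.sub hcs)).sub continuousOn_const)
        (fun t ht => ((hz1 t (hmem t ht).1).sub (hshift t ht)).sub_const _)
        (fun t ht => (hz2 t (hmem t ht).1).sub (hshift2 t ht))
        (fun t ht => by
          have h1 := heq t (hmem t ht).1
          have h2 := heq (t + δ) (hmem t ht).2
          have h3 := hK (t + δ) (hIcc t ht).2 t (hIcc t ht).1
          rw [abs_le, abs_of_nonneg (by linarith : (0:ℝ) ≤ t + δ - t)] at h3
          ring_nf
          ring_nf at h1 h2
          nlinarith [h3.1])
        (by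
          have := bar_b δ hδm
          simp only [zero_add, hbl]
          linarith)
        (by
          have := bar_c (L - δ) hLδm
          simp only [sub_add_cancel, hbr]
          ring_nf
          ring_nf at this
          linarith)
      have hu := up x hxm
      have hl := lo x hxm
      have hxd : x + δ = y := by simp [hδdef]
      rw [hxd] at hu hl
      rw [abs_le]
      constructor <;> [linarith; linarith]
  -- z is Lipschitz on [0,L]
  have hzlip : LipschitzOnWith K z (Icc 0 L) := by
    apply LipschitzOnWith.of_dist_le_mul
    intro x hx y hy
    rcases lt_trichotomy x y with hxy | hxy | hxy
    · have := key x hx y hy hxy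
      rw [Real.dist_eq, Real.dist_eq, abs_of_nonpos (by linarith : x - y ≤ 0),
        abs_sub_comm]
      linarith
    · simp [hxy]
    · have := key y hy x hx hxy
      rw [Real.dist_eq, Real.dist_eq, abs_of_nonneg (by linarith : (0:ℝ) ≤ x - y)]
      linarith
  -- conclude
  intro x hx
  have hfd : HasFDerivAt z (ContinuousLinearMap.smulRight (1 : ℝ →L[ℝ] ℝ) (z' x)) x :=
    (hz1 x hx).hasFDerivAt
  have hle := hfd.le_of_lipschitzOn (Icc_mem_nhds hx.1 hx.2) hzlip
  rwa [ContinuousLinearMap.norm_smulRight_apply, ContinuousLinearMap.one_def,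
    ContinuousLinearMap.norm_id, one_mul, Real.norm_eq_abs] at hle
end

section
/- Let α > 0, z^α ∈ L^∞((0,T)×(0,L)), and let u solve u_t − u_xx + z^α u_x = −v ŷ_x on (0,T)×(0,L) with homogeneous Dirichlet boundary conditions and u(0,·) = 0, where v solves v − α² v_xx = u with homogeneous Dirichlet boundary data, and ŷ ∈ L²(0,T; H²(0,L)). Then u ≡ 0 and v ≡ 0. -/
open Set MeasureTheory Filter Topology

private lemma ereal_toReal_nonneg {x : EReal} (hx : 0 ≤ x) : 0 ≤ x.toReal := by
  rcases eq_or_ne x ⊤ with h | h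
  · simp [h]
  · simpa using EReal.toReal_le_toReal hx (by simp) h

/-- Second derivative test: at an interior local max, the second derivative is ≤ 0. -/
private lemma second_deriv_nonpos {f f' : ℝ → ℝ} {x₀ c : ℝ} {s : Set ℝ}
    (hs : IsOpen s) (hx : x₀ ∈ s)
    (hd : ∀ y ∈ s, HasDerivAt f (f' y) y)
    (hd2 : HasDerivAt f' c x₀) (hmax : IsLocalMax f x₀) : c ≤ 0 := by
  by_contra hc
  push_neg at hc
  have h0 : f' x₀ = 0 := hmax.hasDerivAt_eq_zero (hd x₀ hx)
  have hslope := hasDerivAt_iff_tendsto_slope.1 hd2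
  have hev : ∀ᶠ y in 𝓝[>] x₀, 0 < f' y := by
    have h1 : ∀ᶠ y in 𝓝[≠] x₀, c / 2 < slope f' x₀ y :=
      hslope.eventually (eventually_gt_nhds (by linarith))
    have h2 : ∀ᶠ y in 𝓝[>] x₀, c / 2 < slope f' x₀ y :=
      h1.filter_mono (nhdsWithin_mono _ (fun y hy => ne_of_gt hy))
    filter_upwards [h2, self_mem_nhdsWithin] with y hy1 hy2
    have hy3 : (0:ℝ) < y - x₀ := sub_pos.2 hy2
    have heq : slope f' x₀ y = f' y / (y - x₀) := by
      rw [slope_def_field, h0, sub_zero]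
    rw [heq] at hy1
    have h4 : 0 < f' y / (y - x₀) := lt_trans (by linarith) hy1
    nlinarith [mul_pos h4 hy3, div_mul_cancel₀ (f' y) (ne_of_gt hy3)]
  have hev2 : ∀ᶠ y in 𝓝[>] x₀, y ∈ s :=
    eventually_nhdsWithin_of_eventually_nhds (hs.eventually_mem hx)
  have hev3 : ∀ᶠ y in 𝓝[>] x₀, f y ≤ f x₀ :=
    eventually_nhdsWithin_of_eventually_nhds hmax
  obtain ⟨b, hb, hsub⟩ := mem_nhdsGT_iff_exists_Ioo_subset.1
    ((hev.and (hev2.and hev3)) : _)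
  have hb' : x₀ < b := hb
  set m := (x₀ + b) / 2 with hm
  have hx₀m : x₀ < m := by simp only [hm]; linarith
  have hmb : m < b := by simp only [hm]; linarith
  have hIcc : Icc x₀ m ⊆ insert x₀ (Ioo x₀ b) := by
    intro y hy
    rcases eq_or_lt_of_le hy.1 with h | h
    · exact h ▸ mem_insert _ _
    · exact mem_insert_of_mem _ ⟨h, lt_of_le_of_lt hy.2 hmb⟩
  have hconts : ContinuousOn f (Icc x₀ m) := by
    intro y hy
    have hys : y ∈ s := by
      rcases hIcc hy with h | h
      · exact h ▸ hx
      · exact (hsub h).2.1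
    exact ((hd y hys).continuousAt).continuousWithinAt
  have hmono : StrictMonoOn f (Icc x₀ m) := by
    apply strictMonoOn_of_deriv_pos (convex_Icc _ _) hconts
    intro y hy
    rw [interior_Icc] at hy
    have hyb : y ∈ Ioo x₀ b := ⟨hy.1, lt_trans hy.2 hmb⟩
    have := (hsub hyb)
    rw [(hd y this.2.1).deriv]
    exact this.1
  have h5 : f x₀ < f m := hmono (left_mem_Icc.2 (le_of_lt hx₀m)) (right_mem_Icc.2 (le_of_lt hx₀m)) hx₀m
  have h6 : f m ≤ f x₀ := (hsub ⟨hx₀m, hmb⟩).2.2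
  linarith


/-- Elliptic maximum principle for `g - α² g'' = f` with Dirichlet data. -/
private lemma elliptic_max {α L C : ℝ} (hα : 0 < α) (hL : 0 < L) (hC : 0 ≤ C)
    {f g g'' : ℝ → ℝ}
    (hfc : ContinuousOn f (Icc 0 L)) (hgc : ContinuousOn g (Icc 0 L))
    (hgd : ∀ x ∈ Ioo 0 L, HasDerivAt (deriv g) (g'' x) x)
    (hell : ∀ x ∈ Ioo 0 L, g x - α ^ 2 * g'' x = f x)
    (hg0 : g 0 = 0) (hgL : g L = 0)
    (hfC : ∀ x ∈ Icc 0 L, f x ≤ C) :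
    ∀ x ∈ Icc 0 L, g x ≤ C := by
  by_contra hcon
  push_neg at hcon
  obtain ⟨z, hz, hzC⟩ := hcon
  obtain ⟨x₀, hx₀, hmax⟩ := isCompact_Icc.exists_isMaxOn (⟨0, left_mem_Icc.2 hL.le⟩ : (Icc (0:ℝ) L).Nonempty) hgc
  have hgx₀ : C < g x₀ := lt_of_lt_of_le hzC (hmax hz)
  have hx₀mem : x₀ ∈ Ioo 0 L := by
    constructor
    · rcases eq_or_lt_of_le hx₀.1 with h | h
      · exfalso; rw [← h, hg0] at hgx₀; linarith
      · exact h
    · rcases eq_or_lt_of_le hx₀.2 with h | h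
      · exfalso; rw [h, hgL] at hgx₀; linarith
      · exact h
  have hnbd : Icc (0:ℝ) L ∈ 𝓝 x₀ := Icc_mem_nhds hx₀mem.1 hx₀mem.2
  have hlocmax : IsLocalMax g x₀ := hmax.isLocalMax hnbd
  have hH0 : deriv g x₀ = 0 := hlocmax.deriv_eq_zero
  -- find an interval to the right where g - f stays positive
  set κ := (g x₀ - C) / 2 with hκ
  have hκpos : 0 < κ := by simp only [hκ]; linarith
  have hcont : ContinuousAt (fun y => g y - f y) x₀ := by
    have h1 : ContinuousWithinAt (fun y => g y - f y) (Icc 0 L) x₀ :=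
      (hgc.sub hfc) x₀ hx₀
    exact h1.continuousAt hnbd
  have hev : ∀ᶠ y in 𝓝 x₀, κ < g y - f y := by
    have h2 : κ < g x₀ - f x₀ := by
      have := hfC x₀ hx₀
      simp only [hκ]; linarith
    exact hcont.eventually (eventually_gt_nhds h2)
  obtain ⟨δ, hδpos, hball⟩ := Metric.eventually_nhds_iff.1 (hev.and ((isOpen_Ioo.eventually_mem hx₀mem)))
  set b := min (x₀ + δ / 2) ((x₀ + L) / 2) with hb
  have hx₀b : x₀ < b := by
    apply lt_min <;> [linarith; linarith [hx₀mem.2]]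
  have hbIn : ∀ y ∈ Icc x₀ b, κ < g y - f y ∧ y ∈ Ioo 0 L := by
    intro y hy
    apply hball
    rw [Real.dist_eq, abs_lt]
    have h1 : y ≤ b := hy.2
    have h2 : b ≤ x₀ + δ / 2 := min_le_left _ _
    constructor <;> [linarith [hy.1]; linarith]
  -- derivative of g is positive on (x₀, b]
  have hHpos : ∀ y ∈ Ioc x₀ b, 0 < deriv g y := by
    intro y hy
    have hcH : ContinuousOn (deriv g) (Icc x₀ y) := by
      intro p hp
      have hpm : p ∈ Ioo 0 L := (hbIn p ⟨hp.1, le_trans hp.2 hy.2⟩).2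
      exact ((hgd p hpm).continuousAt).continuousWithinAt
    obtain ⟨ξ, hξ, hξeq⟩ := exists_hasDerivAt_eq_slope (deriv g) g'' hy.1 hcH
      (fun p hp => hgd p (hbIn p ⟨hp.1.le, le_trans hp.2.le hy.2⟩).2)
    have hξm : ξ ∈ Icc x₀ b := ⟨hξ.1.le, le_trans hξ.2.le hy.2⟩
    have h3 := (hbIn ξ hξm).1
    have h4 : g'' ξ = (g ξ - f ξ) / α ^ 2 := by
      have := hell ξ (hbIn ξ hξm).2
      field_simp
      linarith
    have h5 : 0 < g'' ξ := by
      rw [h4]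
      exact div_pos (by linarith) (by positivity)
    rw [hξeq, hH0, sub_zero] at h5
    have h6 : 0 < y - x₀ := sub_pos.2 hy.1
    nlinarith [div_mul_cancel₀ (deriv g y) (ne_of_gt h6)]
  have hmono : StrictMonoOn g (Icc x₀ b) := by
    apply strictMonoOn_of_deriv_pos (convex_Icc _ _)
      (hgc.mono (fun y hy => ⟨le_trans hx₀.1 hy.1, le_trans hy.2 (le_trans (min_le_right _ _) (by linarith [hx₀mem.2] : (x₀+L)/2 ≤ L))⟩))
    intro y hy
    rw [interior_Icc] at hy
    exact hHpos y ⟨hy.1, hy.2.le⟩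
  have h7 : g x₀ < g b := hmono (left_mem_Icc.2 hx₀b.le) (right_mem_Icc.2 hx₀b.le) hx₀b
  have hbmem : b ∈ Icc 0 L := by
    constructor
    · linarith [hx₀mem.1]
    · calc b ≤ (x₀ + L) / 2 := min_le_right _ _
        _ ≤ L := by linarith [hx₀mem.2]
  exact absurd (hmax hbmem) (not_le.2 h7)

/-- One-sided parabolic barrier estimate on a time slab `[τ, σ]`. -/
private lemma parabolic_step
    (T L α : ℝ) (hT : 0 < T) (hL : 0 < L) (hα : 0 < α)
    (zα : ℝ → ℝ → ℝ)
    (u ut ux uxx v vxx yhatx : ℝ → ℝ → ℝ)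
    (a : ℝ → ℝ) (ha : IntervalIntegrable a MeasureTheory.volume 0 T)
    (hya : ∀ t ∈ Ioo 0 T, ∀ x ∈ Icc 0 L, |yhatx t x| ≤ a t)
    (huc : ContinuousOn (fun p : ℝ × ℝ => u p.1 p.2) (Icc 0 T ×ˢ Icc 0 L))
    (hvc : ContinuousOn (fun p : ℝ × ℝ => v p.1 p.2) (Icc 0 T ×ˢ Icc 0 L))
    (hut : ∀ t ∈ Ioo 0 T, ∀ x ∈ Ioo 0 L, HasDerivAt (fun τ => u τ x) (ut t x) t)
    (hux : ∀ t ∈ Ioo 0 T, ∀ x ∈ Ioo 0 L, HasDerivAt (u t) (ux t x) x)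
    (huxx : ∀ t ∈ Ioo 0 T, ∀ x ∈ Ioo 0 L, HasDerivAt (ux t) (uxx t x) x)
    (hvxx : ∀ t ∈ Ioo 0 T, ∀ x ∈ Ioo 0 L, HasDerivAt (deriv (v t)) (vxx t x) x)
    (heq : ∀ t ∈ Ioo 0 T, ∀ x ∈ Ioo 0 L,
      ut t x - uxx t x + zα t x * ux t x = -(v t x) * yhatx t x)
    (hell : ∀ t ∈ Ioo 0 T, ∀ x ∈ Ioo 0 L, v t x - α ^ 2 * vxx t x = u t x)
    (hub : ∀ t ∈ Icc 0 T, u t 0 = 0 ∧ u t L = 0)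
    (hvb : ∀ t ∈ Icc 0 T, v t 0 = 0 ∧ v t L = 0)
    (τ σ : ℝ) (hτ : 0 ≤ τ) (hτσ : τ < σ) (hσT : σ < T)
    (hint : (∫ t in τ..σ, a t) ≤ 1/2)
    (huτ : ∀ x ∈ Icc 0 L, u τ x = 0)
    (S : ℝ) (hS0 : 0 ≤ S)
    (hSb : ∀ t ∈ Icc τ σ, ∀ x ∈ Icc 0 L, |u t x| ≤ S)
    (ε : ℝ) (hε : 0 < ε) :
    ∀ t ∈ Icc τ σ, ∀ x ∈ Icc 0 L, u t x ≤ ε * (1 + T) + 3/4 * S := by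
  -- nonnegativity of a on (τ, σ)
  have hsub : Ioo τ σ ⊆ Ioo 0 T := Ioo_subset_Ioo hτ hσT.le
  have hanneg : ∀ t ∈ Ioo τ σ, 0 ≤ a t := fun t ht =>
    le_trans (abs_nonneg _) (hya t (hsub ht) 0 (left_mem_Icc.2 hL.le))
  -- a⁺ extended by zero off [τ,σ]
  set ab : ℝ → ℝ := (Icc τ σ).indicator (fun t => max (a t) 0) with hab_def
  have haIcc : IntegrableOn a (Icc τ σ) := by
    have h1 : IntervalIntegrable a volume τ σ :=
      ha.mono_set (by rw [uIcc_of_le hτσ.le, uIcc_of_le hT.le]; exact Icc_subset_Icc hτ hσT.le)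
    exact (intervalIntegrable_iff_integrableOn_Icc_of_le hτσ.le).1 h1
  have habInt : Integrable ab := MeasureTheory.IntegrableOn.integrable_indicator (haIcc.pos_part) measurableSet_Icc
  have hab_nonneg : ∀ x, 0 ≤ ab x := fun x => by
    by_cases h : x ∈ Icc τ σ
    · simp [hab_def, indicator_of_mem h, le_max_right]
    · simp [hab_def, indicator_of_notMem h]
  have hab_int_le : (∫ x, ab x) ≤ 1/2 := by
    rw [hab_def, MeasureTheory.integral_indicator measurableSet_Icc]
    have hres : volume.restrict (Icc τ σ) = volume.restrict (Ioo τ σ) :=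
      Measure.restrict_congr_set (Ioo_ae_eq_Icc).symm
    have hcongr : ∫ x in Icc τ σ, max (a x) 0 = ∫ x in Icc τ σ, a x := by
      rw [hres]
      apply integral_congr_ae
      filter_upwards [ae_restrict_mem measurableSet_Ioo] with x hx
      exact max_eq_left (hanneg x hx)
    rw [hcongr, MeasureTheory.integral_Icc_eq_integral_Ioc, ← intervalIntegral.integral_of_le hτσ.le]
    exact hint
  -- Vitali–Carathéodory majorant
  obtain ⟨g, hg_lt, hg_lsc, hg_int, hg_top, hg_intlt⟩ :=
    exists_lt_lowerSemicontinuous_integral_lt ab habInt (by norm_num : (0:ℝ) < 1/4)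
  set G : ℝ → ℝ := fun x => (g x).toReal with hG_def
  have hG_int : Integrable G := hg_int
  have hG_nonneg : ∀ x, 0 ≤ G x := fun x =>
    ereal_toReal_nonneg (le_of_lt (lt_of_le_of_lt (by exact_mod_cast hab_nonneg x) (hg_lt x)))
  have hG_ii : ∀ s t : ℝ, IntervalIntegrable G volume s t := fun s t => hG_int.intervalIntegrable
  set Φ : ℝ → ℝ := fun t => ∫ s in τ..t, G s with hΦ_def
  have hΦc : Continuous Φ := intervalIntegral.continuous_primitive hG_ii τ
  have hΦdiff : ∀ s t : ℝ, Φ t - Φ s = ∫ x in s..t, G x := fun s t =>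
    intervalIntegral.integral_interval_sub_left (hG_ii τ t) (hG_ii τ s)
  have hΦmono : ∀ s t : ℝ, s ≤ t → Φ s ≤ Φ t := by
    intro s t hst
    have h1 : 0 ≤ ∫ x in s..t, G x :=
      intervalIntegral.integral_nonneg hst (fun x _ => hG_nonneg x)
    have := hΦdiff s t
    linarith
  have hΦτ : Φ τ = 0 := by simp [hΦ_def]
  have hΦσ : Φ σ ≤ 3/4 := by
    have h1 : Φ σ = ∫ x in Ioc τ σ, G x := intervalIntegral.integral_of_le hτσ.le
    have h2 : (∫ x in Ioc τ σ, G x) ≤ ∫ x, G x :=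
      setIntegral_le_integral hG_int (Eventually.of_forall hG_nonneg)
    have h3 : (∫ x, G x) < (∫ x, ab x) + 1/4 := hg_intlt
    linarith
  set w : ℝ → ℝ := fun t => ε * (1 + (t - τ)) + S * Φ t with hw_def
  have hwc : Continuous w := by
    apply Continuous.add
    · exact (continuous_const.mul (continuous_const.add (continuous_id.sub continuous_const)))
    · exact continuous_const.mul hΦc
  -- main claim : u < w on the slab
  have main : ∀ t ∈ Icc τ σ, ∀ x ∈ Icc 0 L, u t x < w t := by
    by_contra hcon
    push_neg at hcon
    obtain ⟨t₁, ht₁, x₁, hx₁, hwt₁⟩ := hcon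
    set K' : Set (ℝ × ℝ) := Icc τ σ ×ˢ Icc 0 L with hK'_def
    have hK'sub : K' ⊆ Icc 0 T ×ˢ Icc 0 L :=
      prod_mono (Icc_subset_Icc hτ hσT.le) (subset_refl _)
    have hK'c : IsCompact K' := isCompact_Icc.prod isCompact_Icc
    set f₀ : ℝ × ℝ → ℝ := fun p => u p.1 p.2 - w p.1 with hf₀_def
    have hf₀c : ContinuousOn f₀ K' :=
      (huc.mono hK'sub).sub ((hwc.comp continuous_fst).continuousOn)
    set E : Set (ℝ × ℝ) := K' ∩ f₀ ⁻¹' (Ici 0) with hE_def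
    have hEne : E.Nonempty := ⟨(t₁, x₁), ⟨⟨ht₁, hx₁⟩, by simp [hf₀_def]; linarith⟩⟩
    have hEcomp : IsCompact E := hK'c.of_isClosed_subset
      (hf₀c.preimage_isClosed_of_isClosed (hK'c.isClosed) isClosed_Ici) inter_subset_left
    obtain ⟨p₀, hp₀E, hp₀min⟩ := hEcomp.exists_isMinOn hEne continuous_fst.continuousOn
    set t₀ := p₀.1 with ht₀_def
    have ht₀K : t₀ ∈ Icc τ σ := hp₀E.1.1
    have ht₀w : w t₀ ≤ u t₀ p₀.2 := by
      have := hp₀E.2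
      simp only [mem_preimage, mem_Ici, hf₀_def] at this
      linarith
    have hbefore : ∀ t, τ ≤ t → t < t₀ → ∀ x ∈ Icc 0 L, u t x < w t := by
      intro t h1 h2 x hx
      by_contra h
      push_neg at h
      have hmem : (t, x) ∈ E := ⟨⟨⟨h1, le_trans h2.le ht₀K.2⟩, hx⟩, by
        simp only [mem_preimage, mem_Ici, hf₀_def]; linarith⟩
      have := hp₀min hmem
      simp only [ht₀_def] at this
      exact absurd this (not_le.2 h2)
    have ht₀T : t₀ ∈ Icc 0 T := ⟨le_trans hτ ht₀K.1, le_trans ht₀K.2 hσT.le⟩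
    have ht₀τ : τ < t₀ := by
      rcases eq_or_lt_of_le ht₀K.1 with h | h
      · exfalso
        have h1 : u t₀ p₀.2 = 0 := by rw [← h]; exact huτ p₀.2 hp₀E.1.2
        have h2 : w t₀ = ε := by rw [← h]; simp [hw_def, hΦτ]
        rw [h1, h2] at ht₀w
        linarith
      · exact h
    have ht₀Io : t₀ ∈ Ioo 0 T := ⟨lt_of_le_of_lt hτ ht₀τ, lt_of_le_of_lt ht₀K.2 hσT⟩
    -- spatial max at time t₀
    have hslice : ContinuousOn (u t₀) (Icc 0 L) := by
      have h1 : ContinuousOn (fun x => (t₀, x)) (Icc 0 L) :=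
        (continuous_const.prodMk continuous_id).continuousOn
      exact huc.comp h1 (fun x hx => ⟨ht₀T, hx⟩)
    obtain ⟨x₀, hx₀, hx₀max⟩ := isCompact_Icc.exists_isMaxOn
      (⟨0, left_mem_Icc.2 hL.le⟩ : (Icc (0:ℝ) L).Nonempty) hslice
    have hwx₀ : w t₀ ≤ u t₀ x₀ := le_trans ht₀w (hx₀max hp₀E.1.2)
    have hwpos : 0 < w t₀ := by
      have h1 : 0 ≤ Φ t₀ := by rw [← hΦτ]; exact hΦmono τ t₀ ht₀K.1
      have h2 : 0 ≤ S * Φ t₀ := mul_nonneg hS0 h1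
      have h3 : 0 < ε * (1 + (t₀ - τ)) := by
        apply mul_pos hε; linarith [ht₀τ]
      simp only [hw_def]; linarith
    have hx₀Io : x₀ ∈ Ioo 0 L := by
      constructor
      · rcases eq_or_lt_of_le hx₀.1 with h | h
        · exfalso
          have h0 : u t₀ x₀ = 0 := by rw [← h]; exact (hub t₀ ht₀T).1
          linarith
        · exact h
      · rcases eq_or_lt_of_le hx₀.2 with h | h
        · exfalso
          have h0 : u t₀ x₀ = 0 := by rw [h]; exact (hub t₀ ht₀T).2
          linarith
        · exact h
    -- a real c between ab t₀ and g t₀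
    have habt₀ : ab t₀ = max (a t₀) 0 := indicator_of_mem ht₀K (fun t => max (a t) 0)
    obtain ⟨c, hc1, hc2⟩ := EReal.lt_iff_exists_real_btwn.1 (hg_lt t₀)
    have hc1' : ab t₀ < c := by exact_mod_cast hc1
    have hc0 : 0 ≤ c := le_trans (by rw [habt₀]; exact le_max_right _ _) hc1'.le
    have hca : a t₀ ≤ c := le_trans (by rw [habt₀]; exact le_max_left _ _) hc1'.le
    -- lower semicontinuity: g > c near t₀
    have hUopen : IsOpen {y | (c : EReal) < g y} :=
      lowerSemicontinuous_iff_isOpen_preimage.1 hg_lsc c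
    obtain ⟨δ, hδpos, hballU⟩ := Metric.isOpen_iff.1 hUopen t₀ hc2
    set t₂ := max τ (t₀ - δ / 2) with ht₂_def
    have ht₂lt : t₂ < t₀ := max_lt ht₀τ (by linarith)
    have ht₂τ : τ ≤ t₂ := le_max_left _ _
    have hIccU : ∀ y ∈ Icc t₂ t₀, (c : EReal) < g y := by
      intro y hy
      apply hballU
      rw [Metric.mem_ball, Real.dist_eq, abs_lt]
      have h1 : t₀ - δ / 2 ≤ t₂ := le_max_right _ _
      constructor <;> [linarith [hy.1, hy.2]; linarith [hy.2]]
    -- key integral bound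
    have hkey : ∀ s, t₂ ≤ s → s ≤ t₀ → c * (t₀ - s) ≤ Φ t₀ - Φ s := by
      intro s h1 h2
      rw [hΦdiff s t₀]
      have h3 : (∫ x in s..t₀, (c : ℝ)) ≤ ∫ x in s..t₀, G x := by
        apply intervalIntegral.integral_mono_ae_restrict h2 intervalIntegrable_const (hG_ii s t₀)
        filter_upwards [ae_restrict_mem measurableSet_Icc,
          ae_restrict_of_ae hg_top] with y hy1 hy2
        have h4 : (c : EReal) < g y := hIccU y ⟨le_trans h1 hy1.1, hy1.2⟩
        have h5 := EReal.toReal_le_toReal h4.le (by simp) hy2.ne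
        rwa [EReal.toReal_coe] at h5
      rw [intervalIntegral.integral_const, smul_eq_mul] at h3
      linarith [h3]
    -- time derivative lower bound
    have hder := hut t₀ ht₀Io x₀ hx₀Io
    have hlb : ε + S * c ≤ ut t₀ x₀ := by
      have hslopet := hasDerivAt_iff_tendsto_slope.1 hder
      have hmono' : 𝓝[<] t₀ ≤ 𝓝[≠] t₀ := nhdsWithin_mono _ (fun y hy => ne_of_lt hy)
      refine ge_of_tendsto (hslopet.mono_left hmono') ?_
      have hev1 : ∀ᶠ s in 𝓝[<] t₀, t₂ < s :=
        eventually_nhdsWithin_of_eventually_nhds (eventually_gt_nhds ht₂lt)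
      filter_upwards [hev1, self_mem_nhdsWithin] with s hs1 hs2
      have hs3 : s < t₀ := hs2
      have hsτ : τ ≤ s := le_trans ht₂τ hs1.le
      have hsb : u s x₀ < w s := hbefore s hsτ hs3 x₀ hx₀
      have hkey' := hkey s hs1.le hs3.le
      have hnum : w t₀ - w s ≤ u t₀ x₀ - u s x₀ := by linarith
      have hwdiff : w t₀ - w s = ε * (t₀ - s) + S * (Φ t₀ - Φ s) := by
        simp only [hw_def]; ring
      have hpos : (0:ℝ) < t₀ - s := sub_pos.2 hs3
      have h6 : (ε + S * c) * (t₀ - s) ≤ u t₀ x₀ - u s x₀ := by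
        have h7 : S * (c * (t₀ - s)) ≤ S * (Φ t₀ - Φ s) :=
          mul_le_mul_of_nonneg_left hkey' hS0
        nlinarith
      have hslope_eq : slope (fun τ' => u τ' x₀) t₀ s = (u t₀ x₀ - u s x₀) / (t₀ - s) := by
        rw [slope_def_field]
        rw [div_eq_div_iff (sub_ne_zero.2 (ne_of_lt hs3)) (ne_of_gt hpos)]
        ring
      rw [hslope_eq, le_div_iff₀ hpos]
      linarith
    -- spatial derivative info
    have hlocmax : IsLocalMax (u t₀) x₀ := hx₀max.isLocalMax (Icc_mem_nhds hx₀Io.1 hx₀Io.2)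
    have hux0 : ux t₀ x₀ = 0 := hlocmax.hasDerivAt_eq_zero (hux t₀ ht₀Io x₀ hx₀Io)
    have huxx0 : uxx t₀ x₀ ≤ 0 :=
      second_deriv_nonpos isOpen_Ioo hx₀Io (fun y hy => hux t₀ ht₀Io y hy)
        (huxx t₀ ht₀Io x₀ hx₀Io) hlocmax
    -- bound on v via the elliptic maximum principle
    have hvslice : ContinuousOn (v t₀) (Icc 0 L) := by
      have h1 : ContinuousOn (fun x => (t₀, x)) (Icc 0 L) :=
        (continuous_const.prodMk continuous_id).continuousOn
      exact hvc.comp h1 (fun x hx => ⟨ht₀T, hx⟩)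
    have hvub : ∀ x ∈ Icc 0 L, v t₀ x ≤ S :=
      elliptic_max hα hL hS0 hslice hvslice (fun x hx => hvxx t₀ ht₀Io x hx)
        (fun x hx => hell t₀ ht₀Io x hx) (hvb t₀ ht₀T).1 (hvb t₀ ht₀T).2
        (fun x hx => le_trans (le_abs_self _) (hSb t₀ ht₀K x hx))
    have hvlb : ∀ x ∈ Icc 0 L, -(v t₀ x) ≤ S := by
      have hderneg : ∀ x ∈ Ioo 0 L, HasDerivAt (deriv (fun y => -(v t₀ y))) (-(vxx t₀ x)) x := by
        intro x hx
        have h1 : (deriv fun y => -(v t₀ y)) = fun y => -(deriv (v t₀) y) := by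
          funext y; exact deriv.fun_neg
        rw [h1]
        exact (hvxx t₀ ht₀Io x hx).neg
      exact elliptic_max hα hL hS0 (hslice.neg) (hvslice.neg) hderneg
        (fun x hx => by have := hell t₀ ht₀Io x hx; rw [Pi.neg_apply]; ring_nf; ring_nf at this; linarith)
        (by simp [(hvb t₀ ht₀T).1]) (by simp [(hvb t₀ ht₀T).2])
        (fun x hx => le_trans (neg_le_abs _) (hSb t₀ ht₀K x hx))
    have hvbd : |v t₀ x₀| ≤ S := abs_le.2 ⟨by linarith [hvlb x₀ hx₀], hvub x₀ hx₀⟩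
    -- conclude contradiction via the PDE
    have heqq := heq t₀ ht₀Io x₀ hx₀Io
    have hyb := hya t₀ ht₀Io x₀ hx₀
    have hrhs : -(v t₀ x₀) * yhatx t₀ x₀ ≤ S * c := by
      calc -(v t₀ x₀) * yhatx t₀ x₀ ≤ |(-(v t₀ x₀)) * yhatx t₀ x₀| := le_abs_self _
        _ = |v t₀ x₀| * |yhatx t₀ x₀| := by rw [abs_mul, abs_neg]
        _ ≤ S * a t₀ := mul_le_mul hvbd hyb (abs_nonneg _) hS0
        _ ≤ S * c := mul_le_mul_of_nonneg_left hca hS0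
    have hfinal : ut t₀ x₀ ≤ S * c := by
      have : ut t₀ x₀ = uxx t₀ x₀ - zα t₀ x₀ * ux t₀ x₀ + -(v t₀ x₀) * yhatx t₀ x₀ := by
        linarith
      rw [this, hux0, mul_zero, sub_zero]
      linarith
    linarith
  -- conclude the stated bound
  intro t ht x hx
  have h1 := main t ht x hx
  have h2 : Φ t ≤ 3/4 := le_trans (hΦmono t σ ht.2) hΦσ
  have h3 : S * Φ t ≤ S * (3/4) := mul_le_mul_of_nonneg_left h2 hS0
  have h4 : ε * (1 + (t - τ)) ≤ ε * (1 + T) := by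
    apply mul_le_mul_of_nonneg_left _ hε.le
    have : t - τ ≤ σ - τ := by linarith [ht.2]
    have : σ - τ ≤ T := by linarith [hσT, hτ]
    linarith [ht.1, ht.2, hσT, hτ]
  simp only [hw_def] at h1
  linarith


private lemma zero_limit {T L : ℝ} {F : ℝ → ℝ → ℝ}
    (hF : ContinuousOn (fun p : ℝ × ℝ => F p.1 p.2) (Icc 0 T ×ˢ Icc 0 L))
    {s : Set ℝ} (hs : s ⊆ Icc 0 T) {t x : ℝ} (ht : t ∈ Icc 0 T) (hx : x ∈ Icc 0 L)
    (hcl : t ∈ closure s) (hzero : ∀ r ∈ s, F r x = 0) : F t x = 0 := by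
  have hne : (𝓝[s] t).NeBot := mem_closure_iff_nhdsWithin_neBot.1 hcl
  have hFx : ContinuousOn (fun r => F r x) (Icc 0 T) := by
    have h1 : ContinuousOn (fun r => (r, x)) (Icc 0 T) :=
      (continuous_id.prodMk continuous_const).continuousOn
    exact hF.comp h1 (fun r hr => ⟨hr, hx⟩)
  have h2 : Filter.Tendsto (fun r => F r x) (𝓝[s] t) (𝓝 (F t x)) := ((hFx t ht).mono hs).tendsto
  have h3 : Filter.Tendsto (fun r => F r x) (𝓝[s] t) (𝓝 0) := by
    apply Filter.Tendsto.congr' _ tendsto_const_nhds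
    filter_upwards [self_mem_nhdsWithin] with r hr
    exact (hzero r hr).symm
  exact tendsto_nhds_unique h2 h3

/-- uniqueness lemma for the viscous Burgers-α system: if `u` solves
`u_t - u_xx + z^α u_x = -v ŷ_x` with homogeneous Dirichlet data and `u(0,·)=0`, where
`v - α² v_xx = u` with homogeneous Dirichlet data and `ŷ ∈ L²(0,T;H²(0,L))`, then
`u ≡ 0` and `v ≡ 0`. -/
theorem burgers_alpha_uniqueness
    (T L α : ℝ) (hT : 0 < T) (hL : 0 < L) (hα : 0 < α)
    (zα : ℝ → ℝ → ℝ) (M : ℝ) (hz : ∀ t ∈ Icc 0 T, ∀ x ∈ Icc 0 L, |zα t x| ≤ M)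
    (u ut ux uxx v vxx yhatx : ℝ → ℝ → ℝ)
    -- ŷ ∈ L²(0,T;H²(0,L)) ↪ L²(0,T;C¹([0,L])): integrable control of ‖ŷ_x(t,·)‖_∞
    (a : ℝ → ℝ) (ha : IntervalIntegrable a MeasureTheory.volume 0 T)
    (hya : ∀ t ∈ Ioo 0 T, ∀ x ∈ Icc 0 L, |yhatx t x| ≤ a t)
    -- regularity of u, v
    (huc : ContinuousOn (fun p : ℝ × ℝ => u p.1 p.2) (Icc 0 T ×ˢ Icc 0 L))
    (hvc : ContinuousOn (fun p : ℝ × ℝ => v p.1 p.2) (Icc 0 T ×ˢ Icc 0 L))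
    (hut : ∀ t ∈ Ioo 0 T, ∀ x ∈ Ioo 0 L, HasDerivAt (fun τ => u τ x) (ut t x) t)
    (hux : ∀ t ∈ Ioo 0 T, ∀ x ∈ Ioo 0 L, HasDerivAt (u t) (ux t x) x)
    (huxx : ∀ t ∈ Ioo 0 T, ∀ x ∈ Ioo 0 L, HasDerivAt (ux t) (uxx t x) x)
    (hvxx : ∀ t ∈ Ioo 0 T, ∀ x ∈ Ioo 0 L, HasDerivAt (deriv (v t)) (vxx t x) x)
    -- the coupled system
    (heq : ∀ t ∈ Ioo 0 T, ∀ x ∈ Ioo 0 L,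
      ut t x - uxx t x + zα t x * ux t x = -(v t x) * yhatx t x)
    (hell : ∀ t ∈ Ioo 0 T, ∀ x ∈ Ioo 0 L, v t x - α ^ 2 * vxx t x = u t x)
    -- homogeneous boundary and initial conditions
    (hub : ∀ t ∈ Icc 0 T, u t 0 = 0 ∧ u t L = 0)
    (hvb : ∀ t ∈ Icc 0 T, v t 0 = 0 ∧ v t L = 0)
    (hu0 : ∀ x ∈ Icc 0 L, u 0 x = 0) :
    ∀ t ∈ Icc 0 T, ∀ x ∈ Icc 0 L, u t x = 0 ∧ v t x = 0 := by
  -- step 1: continuous induction up to any T' < T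
  have key : ∀ T', 0 < T' → T' < T → ∀ t ∈ Icc 0 T', ∀ x ∈ Icc 0 L, u t x = 0 := by
    intro T' hT'0 hT'T
    set Z : Set ℝ := {τ' | τ' ∈ Icc 0 T' ∧ ∀ t ∈ Icc 0 τ', ∀ x ∈ Icc 0 L, u t x = 0} with hZdef
    have h0Z : (0:ℝ) ∈ Z := ⟨left_mem_Icc.2 hT'0.le, by
      intro t ht x hx
      have h1 : t = 0 := le_antisymm ht.2 ht.1
      rw [h1]; exact hu0 x hx⟩
    have hZne : Z.Nonempty := ⟨0, h0Z⟩
    have hZbdd : BddAbove Z := ⟨T', fun y hy => hy.1.2⟩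
    set τ' := sSup Z with hτ'def
    have hτ'Icc : τ' ∈ Icc 0 T' := ⟨le_csSup hZbdd h0Z, csSup_le hZne (fun y hy => hy.1.2)⟩
    have hIco : ∀ t ∈ Ico 0 τ', ∀ x ∈ Icc 0 L, u t x = 0 := by
      intro t ht x hx
      obtain ⟨y, hyZ, hy⟩ := exists_lt_of_lt_csSup hZne ht.2
      exact hyZ.2 t ⟨ht.1, hy.le⟩ x hx
    have hτ'Z : ∀ t ∈ Icc 0 τ', ∀ x ∈ Icc 0 L, u t x = 0 := by
      intro t ht x hx
      rcases lt_or_eq_of_le ht.2 with h | h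
      · exact hIco t ⟨ht.1, h⟩ x hx
      · rcases eq_or_lt_of_le ht.1 with h0 | h0
        · rw [← h0]; exact hu0 x hx
        · refine zero_limit huc (s := Ico 0 t) ?_ ?_ hx ?_ ?_
          · exact fun r hr => ⟨hr.1, le_trans hr.2.le (by
              have : t ≤ T' := le_trans ht.2 hτ'Icc.2
              linarith)⟩
          · exact ⟨ht.1, le_trans (le_trans ht.2 hτ'Icc.2) hT'T.le⟩
          · rw [closure_Ico (ne_of_lt h0)]
            exact right_mem_Icc.2 (le_of_lt h0)
          · intro r hr
            exact hIco r ⟨hr.1, lt_of_lt_of_le hr.2 (le_of_eq h)⟩ x hx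
    by_cases hlt : τ' < T'
    · exfalso
      -- find σ ∈ (τ', T'] with small integral of a
      have hii : IntervalIntegrable a MeasureTheory.volume τ' T' := by
        apply ha.mono_set
        rw [uIcc_of_le hlt.le, uIcc_of_le hT.le]
        exact Icc_subset_Icc hτ'Icc.1 hT'T.le
      have hAcont : ContinuousOn (fun s => ∫ r in τ'..s, a r) (Icc τ' T') := by
        have h1 := intervalIntegral.continuousOn_primitive_interval
          (f := a) (μ := MeasureTheory.volume) (a := τ') (b := T') ?_
        · rwa [uIcc_of_le hlt.le] at h1
        · rw [uIcc_of_le hlt.le]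
          exact (intervalIntegrable_iff_integrableOn_Icc_of_le hlt.le).1 hii
      have hAt : Filter.Tendsto (fun s => ∫ r in τ'..s, a r) (𝓝[Icc τ' T'] τ') (𝓝 0) := by
        have h1 := (hAcont τ' (left_mem_Icc.2 hlt.le)).tendsto
        simpa using h1
      have hne : (𝓝[Ioc τ' T'] τ').NeBot := by
        apply mem_closure_iff_nhdsWithin_neBot.1
        rw [closure_Ioc (ne_of_lt hlt)]
        exact left_mem_Icc.2 hlt.le
      have hev : ∀ᶠ s in 𝓝[Ioc τ' T'] τ', (∫ r in τ'..s, a r) < 1/2 := by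
        have h2 : ∀ᶠ s in 𝓝[Icc τ' T'] τ', (∫ r in τ'..s, a r) < 1/2 :=
          hAt.eventually (eventually_lt_nhds (by norm_num))
        exact h2.filter_mono (nhdsWithin_mono _ Ioc_subset_Icc_self)
      obtain ⟨σ, hσint, hσmem⟩ := (hev.and self_mem_nhdsWithin).exists
      -- the sup of |u| on the strip up to σ
      have hσT : σ < T := lt_of_le_of_lt hσmem.2 hT'T
      have hKsub : Icc 0 σ ×ˢ Icc 0 L ⊆ Icc 0 T ×ˢ Icc 0 L :=
        prod_mono (Icc_subset_Icc (le_refl _) hσT.le) (subset_refl _)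
      have hKc : IsCompact (Icc 0 σ ×ˢ Icc (0:ℝ) L) := isCompact_Icc.prod isCompact_Icc
      have hKne : (Icc 0 σ ×ˢ Icc (0:ℝ) L).Nonempty :=
        ⟨(0,0), by
          constructor
          · exact left_mem_Icc.2 (le_trans hτ'Icc.1 hσmem.1.le)
          · exact left_mem_Icc.2 hL.le⟩
      obtain ⟨pm, hpm, hpmmax⟩ := hKc.exists_isMaxOn hKne ((huc.mono hKsub).abs)
      set S := |u pm.1 pm.2| with hSdef
      have hS0 : 0 ≤ S := abs_nonneg _
      have hSb : ∀ t ∈ Icc τ' σ, ∀ x ∈ Icc 0 L, |u t x| ≤ S := by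
        intro t ht x hx
        have h := hpmmax (show ((t, x) : ℝ × ℝ) ∈ Icc 0 σ ×ˢ Icc 0 L from ⟨⟨le_trans hτ'Icc.1 ht.1, ht.2⟩, hx⟩)
        simpa using h
      have huτ' : ∀ x ∈ Icc 0 L, u τ' x = 0 := fun x hx =>
        hτ'Z τ' ⟨hτ'Icc.1, le_refl _⟩ x hx
      -- barrier estimate for u and -u
      have hstep : ∀ ε, 0 < ε → ∀ t ∈ Icc τ' σ, ∀ x ∈ Icc 0 L,
          |u t x| ≤ ε * (1 + T) + 3/4 * S := by
        intro ε hε t ht x hx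
        have h1 := parabolic_step T L α hT hL hα zα u ut ux uxx v vxx yhatx a ha hya
          huc hvc hut hux huxx hvxx heq hell hub hvb τ' σ hτ'Icc.1 hσmem.1 hσT
          hσint.le huτ' S hS0 hSb ε hε t ht x hx
        have h2 := parabolic_step T L α hT hL hα zα
          (fun t x => -(u t x)) (fun t x => -(ut t x)) (fun t x => -(ux t x))
          (fun t x => -(uxx t x)) (fun t x => -(v t x)) (fun t x => -(vxx t x)) yhatx a ha hya
          (huc.neg) (hvc.neg)
          (fun t ht x hx => (hut t ht x hx).neg)
          (fun t ht x hx => (hux t ht x hx).neg)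
          (fun t ht x hx => (huxx t ht x hx).neg)
          (fun t ht x hx => by
            have h3 : (deriv fun y => -(v t y)) = fun y => -(deriv (v t) y) := by
              funext y; exact deriv.fun_neg
            rw [h3]; exact (hvxx t ht x hx).neg)
          (fun t ht x hx => by
            show -(ut t x) - -(uxx t x) + zα t x * -(ux t x) = -(-(v t x)) * yhatx t x
            linear_combination (-1 : ℝ) * heq t ht x hx)
          (fun t ht x hx => by
            show -(v t x) - α ^ 2 * -(vxx t x) = -(u t x)
            linear_combination (-1 : ℝ) * hell t ht x hx)
          (fun t ht => ⟨by simp [(hub t ht).1], by simp [(hub t ht).2]⟩)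
          (fun t ht => ⟨by simp [(hvb t ht).1], by simp [(hvb t ht).2]⟩)
          τ' σ hτ'Icc.1 hσmem.1 hσT hσint.le
          (fun x hx => by simp [huτ' x hx])
          S hS0
          (fun t ht x hx => by rw [abs_neg]; exact hSb t ht x hx)
          ε hε t ht x hx
        rw [abs_le]
        constructor
        · linarith
        · exact h1
      -- conclude S = 0
      have hSle : S ≤ 0 := by
        by_contra hS
        push_neg at hS
        have h1T : (0:ℝ) < 1 + T := by linarith
        set ε₀ := S / (8 * (1 + T)) with hε₀def
        have hε₀pos : 0 < ε₀ := div_pos hS (by linarith)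
        have hb : |u pm.1 pm.2| ≤ ε₀ * (1 + T) + 3/4 * S := by
          rcases le_or_gt pm.1 τ' with h | h
          · have := hτ'Z pm.1 ⟨hpm.1.1, h⟩ pm.2 hpm.2
            rw [this, abs_zero]
            positivity
          · exact hstep ε₀ hε₀pos pm.1 ⟨h.le, hpm.1.2⟩ pm.2 hpm.2
        have hε₀T : ε₀ * (1 + T) = S / 8 := by
          rw [hε₀def]; field_simp
        rw [← hSdef, hε₀T] at hb
        linarith
      have hzero : ∀ t ∈ Icc 0 σ, ∀ x ∈ Icc 0 L, u t x = 0 := by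
        intro t ht x hx
        have h1 : |u t x| ≤ S := by
          have h := hpmmax (show ((t, x) : ℝ × ℝ) ∈ Icc 0 σ ×ˢ Icc 0 L from ⟨⟨ht.1, ht.2⟩, hx⟩)
          simpa using h
        have h2 : |u t x| ≤ 0 := le_trans h1 hSle
        exact abs_eq_zero.1 (le_antisymm h2 (abs_nonneg _))
      have hσZ : σ ∈ Z := ⟨⟨le_trans hτ'Icc.1 hσmem.1.le, hσmem.2⟩, hzero⟩
      have := le_csSup hZbdd hσZ
      rw [← hτ'def] at this
      linarith [hσmem.1]
    · have heqT' : τ' = T' := le_antisymm hτ'Icc.2 (not_lt.1 hlt)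
      rw [heqT'] at hτ'Z
      exact hτ'Z
  -- step 2: u vanishes on all of [0,T]×[0,L]
  have hIcoT : ∀ t ∈ Ico 0 T, ∀ x ∈ Icc 0 L, u t x = 0 := by
    intro t ht x hx
    exact key ((t + T)/2) (by linarith [ht.1, hT]) (by linarith [ht.2]) t
      ⟨ht.1, by linarith [ht.2]⟩ x hx
  have huz : ∀ t ∈ Icc 0 T, ∀ x ∈ Icc 0 L, u t x = 0 := by
    intro t ht x hx
    refine zero_limit huc (s := Ico 0 T) Ico_subset_Icc_self ht hx ?_
      (fun r hr => hIcoT r hr x hx)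
    rw [closure_Ico (ne_of_lt hT)]
    exact ht
  -- step 3: v vanishes, first on the interior times
  have hvIoo : ∀ t ∈ Ioo 0 T, ∀ x ∈ Icc 0 L, v t x = 0 := by
    intro t ht x hx
    have htIcc : t ∈ Icc 0 T := Ioo_subset_Icc_self ht
    have huslice : ContinuousOn (u t) (Icc 0 L) := by
      have h1 : ContinuousOn (fun y => (t, y)) (Icc 0 L) :=
        (continuous_const.prodMk continuous_id).continuousOn
      exact huc.comp h1 (fun y hy => ⟨htIcc, hy⟩)
    have hvslice : ContinuousOn (v t) (Icc 0 L) := by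
      have h1 : ContinuousOn (fun y => (t, y)) (Icc 0 L) :=
        (continuous_const.prodMk continuous_id).continuousOn
      exact hvc.comp h1 (fun y hy => ⟨htIcc, hy⟩)
    have hupper : ∀ y ∈ Icc 0 L, v t y ≤ 0 :=
      elliptic_max hα hL (le_refl 0) huslice hvslice (fun y hy => hvxx t ht y hy)
        (fun y hy => hell t ht y hy) (hvb t htIcc).1 (hvb t htIcc).2
        (fun y hy => le_of_eq (huz t htIcc y hy))
    have hlower : ∀ y ∈ Icc 0 L, -(v t y) ≤ 0 := by
      have hderneg : ∀ y ∈ Ioo 0 L, HasDerivAt (deriv (fun z => -(v t z))) (-(vxx t y)) y := by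
        intro y hy
        have h1 : (deriv fun z => -(v t z)) = fun z => -(deriv (v t) z) := by
          funext z; exact deriv.fun_neg
        rw [h1]
        exact (hvxx t ht y hy).neg
      exact elliptic_max hα hL (le_refl 0) (huslice.neg) (hvslice.neg) hderneg
        (fun y hy => by
          show -(v t y) - α ^ 2 * -(vxx t y) = -(u t y)
          linear_combination (-1 : ℝ) * hell t ht y hy)
        (by simp [(hvb t htIcc).1]) (by simp [(hvb t htIcc).2])
        (fun y hy => by rw [Pi.neg_apply, huz t htIcc y hy]; norm_num)
    linarith [hupper x hx, hlower x hx]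
  -- conclude
  intro t ht x hx
  refine ⟨huz t ht x hx, ?_⟩
  refine zero_limit hvc (s := Ioo 0 T) Ioo_subset_Icc_self ht hx ?_
    (fun r hr => hvIoo r hr x hx)
  rw [closure_Ioo (ne_of_lt hT)]
  exact ht
end
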